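/- Let C be a trigonometric curve with minimal polynomial μ. Then the set {r ∈ [0,1)² : μ(r) = 0 and ∇μ(r) = 0} is finite; that is, the gradient of μ vanishes at only finitely many points of C. -/

import Mathlib

open MeasureTheory Set

noncomputable section

/-- The unit square `[0,1]²`. -/
def box : Set (ℝ × ℝ) := Set.Icc (0:ℝ) 1 ×ˢ Set.Icc (0:ℝ) 1

/-- Data of a trigonometric polynomial with frequencies on a shifted lattice `ℤ² + σ`,
`σ ∈ {0, 1/2}²`. -/
structure STP where
  σ : ℝ × ℝ
  hσ1 : σ.1 = 0 ∨ σ.1 = 1/2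
  hσ2 : σ.2 = 0 ∨ σ.2 = 1/2
  Λ : Finset (ℤ × ℤ)
  c : ℤ × ℤ → ℂ

/-- The function `r ↦ ∑_{k ∈ Λ} c[k] e^{2πi (k+σ)·r}`. -/
def STP.toFun (p : STP) : ℝ × ℝ → ℂ := fun r =>
  ∑ k ∈ p.Λ, p.c k * Complex.exp (2 * Real.pi * Complex.I *
    (((k.1 : ℂ) + (p.σ.1 : ℂ)) * (r.1 : ℂ) + ((k.2 : ℂ) + (p.σ.2 : ℂ)) * (r.2 : ℂ)))

/-- Frequency support: the indices with nonzero coefficient. -/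
def STP.freqSupp (p : STP) : Finset (ℤ × ℤ) := p.Λ.filter fun k => p.c k ≠ 0

/-- The degree: side lengths of the smallest closed rectangle containing the frequency
support (the shift `σ` does not affect side lengths). -/
def STP.deg (p : STP) : ℤ × ℤ :=
  ((WithBot.unbotD 0 ((p.freqSupp.image Prod.fst).max)) - (WithTop.untopD 0 ((p.freqSupp.image Prod.fst).min)),
   (WithBot.unbotD 0 ((p.freqSupp.image Prod.snd).max)) - (WithTop.untopD 0 ((p.freqSupp.image Prod.snd).min)))

/-- The zero set of `p` in `[0,1]²`. -/
def STP.zeroSet (p : STP) : Set (ℝ × ℝ) := {r | r ∈ box ∧ p.toFun r = 0}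

/-- `γ` divides `μ` among (shifted-lattice) trigonometric polynomials. -/
def DividesS (γ μ : ℝ × ℝ → ℂ) : Prop :=
  ∃ η : STP, η.toFun ≠ 0 ∧ μ = fun r => γ r * η.toFun r

/-- `C` is a trigonometric curve: the zero set in `[0,1]²` of a trigonometric polynomial,
infinite and with no isolated points. -/
def IsTrigCurveS (C : Set (ℝ × ℝ)) : Prop :=
  (∃ p : STP, p.toFun ≠ 0 ∧ C = p.zeroSet) ∧ C.Infinite ∧
    ∀ x ∈ C, AccPt x (Filter.principal C)

/-- `p` is a minimal polynomial of the trigonometric curve `C`: real-valued, with zero set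
`C`, dividing every trigonometric polynomial that vanishes on `C`. -/
def IsMinPolyS (p : STP) (C : Set (ℝ × ℝ)) : Prop :=
  p.toFun ≠ 0 ∧ (∀ r, (p.toFun r).im = 0) ∧ C = p.zeroSet ∧
    ∀ q : STP, q.toFun ≠ 0 → (∀ r ∈ C, q.toFun r = 0) → DividesS p.toFun q.toFun

/-- Partial derivative in the `x` direction. -/
def pderivX (F : ℝ × ℝ → ℂ) (r : ℝ × ℝ) : ℂ := fderiv ℝ F r (1, 0)

/-- Partial derivative in the `y` direction. -/
def pderivY (F : ℝ × ℝ → ℂ) (r : ℝ × ℝ) : ℂ := fderiv ℝ F r (0, 1)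

set_option maxHeartbeats 1000000
set_option synthInstance.maxHeartbeats 400000

namespace S15
open Polynomial

abbrev KK : Type := FractionRing (Polynomial ℂ)

abbrev RR : Type := Polynomial ℂ
abbrev RW : Type := Polynomial RR

/-- evaluation of a two-variable polynomial: inner var ↦ u, outer var ↦ v -/
def ee (u v : ℂ) : RW →+* ℂ := (evalRingHom v).comp (mapRingHom (evalRingHom u))

@[simp] lemma ee_C (u v : ℂ) (g : RR) : ee u v (Polynomial.C g) = g.eval u := by
  simp [ee]

@[simp] lemma ee_X (u v : ℂ) : ee u v (X : RW) = v := by simp [ee]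

@[simp] lemma ee_CX (u v : ℂ) : ee u v (Polynomial.C (X : RR)) = u := by simp [ee]

lemma ee_apply (u v : ℂ) (Q : RW) : ee u v Q = (Q.map (evalRingHom u)).eval v := rfl

/-- the exponential e^{2πit} -/
def ex (t : ℝ) : ℂ := Complex.exp (2 * (Real.pi : ℂ) * Complex.I * (t : ℂ))

lemma ex_ne_zero (t : ℝ) : ex t ≠ 0 := Complex.exp_ne_zero _

lemma ex_add (s t : ℝ) : ex (s + t) = ex s * ex t := by
  rw [ex, ex, ex, ← Complex.exp_add]
  push_cast
  ring_nf

@[simp] lemma ex_one : ex 1 = 1 := by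
  rw [ex]
  push_cast
  rw [mul_one]
  exact Complex.exp_two_pi_mul_I

lemma ex_add_one (t : ℝ) : ex (t + 1) = ex t := by
  rw [ex_add, ex_one, mul_one]

lemma ex_nat_mul (n : ℕ) (t : ℝ) : ex ((n : ℝ) * t) = ex t ^ n := by
  rw [ex, ex, ← Complex.exp_nat_mul]
  push_cast
  ring_nf

lemma ex_int_mul (n : ℤ) (t : ℝ) : ex ((n : ℝ) * t) = ex t ^ n := by
  rw [ex, ex, ← Complex.exp_int_mul]
  push_cast
  ring_nf

lemma ex_injOn : Set.InjOn ex (Set.Ico (0:ℝ) 1) := by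
  intro s hs t ht h
  rw [ex, ex, Complex.exp_eq_exp_iff_exists_int] at h
  obtain ⟨n, hn⟩ := h
  have h2 : (2 * (Real.pi:ℂ) * Complex.I) ≠ 0 := by
    simp [Real.pi_ne_zero, Complex.I_ne_zero]
  have hc : (s : ℂ) = (t : ℂ) + n := by
    have : 2 * (Real.pi:ℂ) * Complex.I * s = 2 * (Real.pi:ℂ) * Complex.I * ((t:ℂ) + n) := by
      rw [hn]; ring
    exact mul_left_cancel₀ h2 this
  have hst : s = t + n := by exact_mod_cast hc
  rcases hs with ⟨hs0, hs1⟩; rcases ht with ⟨ht0, ht1⟩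
  have h1 : (n:ℝ) < 1 := by linarith
  have h2' : (-1:ℝ) < (n:ℝ) := by linarith
  have hn1 : n < 1 := by exact_mod_cast h1
  have hn2 : (-1:ℤ) < n := by exact_mod_cast h2'
  have : n = 0 := by omega
  rw [this] at hst; simpa using hst

lemma ex_range_infinite : (Set.range ex).Infinite := by
  have : (Set.Ico (0:ℝ) 1).Infinite := Set.Ico_infinite (by norm_num)
  exact Set.Infinite.mono (Set.image_subset_range _ _) (this.image ex_injOn)


lemma exp_ex (t : ℝ) : ex t = Complex.exp (2 * (Real.pi : ℂ) * Complex.I * (t : ℝ)) := rfl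

lemma map_eval_eq_zero_of_forall (Q : RW) (u : ℂ)
    (h : ∀ y : ℝ, ee u (ex y) Q = 0) : Q.map (evalRingHom u) = 0 := by
  apply Polynomial.eq_zero_of_infinite_isRoot
  apply Set.Infinite.mono _ ex_range_infinite
  rintro v ⟨y, rfl⟩
  exact h y

lemma zero_of_ee_zero (Q : RW) (h : ∀ x y : ℝ, ee (ex x) (ex y) Q = 0) : Q = 0 := by
  ext j
  rw [Polynomial.coeff_zero]
  have hj : ∀ x : ℝ, (Q.coeff j).eval (ex x) = 0 := by
    intro x
    have := map_eval_eq_zero_of_forall Q (ex x) (fun y => h x y)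
    have := congrArg (fun P => Polynomial.coeff P j) this
    simpa [Polynomial.coeff_map] using this
  have : Q.coeff j = 0 := by
    apply Polynomial.eq_zero_of_infinite_isRoot
    apply Set.Infinite.mono _ ex_range_infinite
    rintro u ⟨x, rfl⟩
    exact hj x
  simp [this]

lemma eq_of_ee_eq (Q₁ Q₂ : RW) (h : ∀ x y : ℝ, ee (ex x) (ex y) Q₁ = ee (ex x) (ex y) Q₂) :
    Q₁ = Q₂ := by
  have := zero_of_ee_zero (Q₁ - Q₂) (fun x y => by rw [map_sub, h x y, sub_self])
  exact sub_eq_zero.mp this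
/-- the linear map (x,y) ↦ a x + b y -/
def L (a b : ℂ) : (ℝ × ℝ) →L[ℝ] ℂ :=
  a • (Complex.ofRealCLM.comp (ContinuousLinearMap.fst ℝ ℝ ℝ)) +
  b • (Complex.ofRealCLM.comp (ContinuousLinearMap.snd ℝ ℝ ℝ))

@[simp] lemma L_apply (a b : ℂ) (r : ℝ × ℝ) : L a b r = a * r.1 + b * r.2 := by
  simp [L, smul_eq_mul]

def dxP (p : STP) : STP :=
  ⟨p.σ, p.hσ1, p.hσ2, p.Λ, fun k => p.c k * (2 * (Real.pi:ℂ) * Complex.I * ((k.1:ℂ) + (p.σ.1:ℂ)))⟩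

def dyP (p : STP) : STP :=
  ⟨p.σ, p.hσ1, p.hσ2, p.Λ, fun k => p.c k * (2 * (Real.pi:ℂ) * Complex.I * ((k.2:ℂ) + (p.σ.2:ℂ)))⟩

lemma toFun_eq_L (p : STP) : p.toFun = fun r =>
    ∑ k ∈ p.Λ, p.c k * Complex.exp
      (L (2*(Real.pi:ℂ)*Complex.I*((k.1:ℂ) + (p.σ.1:ℂ))) (2*(Real.pi:ℂ)*Complex.I*((k.2:ℂ) + (p.σ.2:ℂ))) r) := by
  funext r
  refine Finset.sum_congr rfl fun k _ => ?_
  rw [L_apply]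
  ring_nf

lemma hasFDerivAt_toFun (p : STP) (r : ℝ × ℝ) :
    HasFDerivAt p.toFun
      (∑ k ∈ p.Λ, (p.c k • (Complex.exp
        (L (2*(Real.pi:ℂ)*Complex.I*((k.1:ℂ) + (p.σ.1:ℂ))) (2*(Real.pi:ℂ)*Complex.I*((k.2:ℂ) + (p.σ.2:ℂ))) r) •
        (L (2*(Real.pi:ℂ)*Complex.I*((k.1:ℂ) + (p.σ.1:ℂ))) (2*(Real.pi:ℂ)*Complex.I*((k.2:ℂ) + (p.σ.2:ℂ))))))) r := by
  rw [toFun_eq_L]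
  apply HasFDerivAt.fun_sum
  intro k _
  exact ((L _ _).hasFDerivAt.cexp).const_mul (p.c k)

lemma pderivX_toFun (p : STP) (r : ℝ × ℝ) : pderivX p.toFun r = (dxP p).toFun r := by
  rw [pderivX, (hasFDerivAt_toFun p r).fderiv]
  rw [ContinuousLinearMap.sum_apply]
  rw [dxP, STP.toFun]
  refine Finset.sum_congr rfl fun k _ => ?_
  simp only [ContinuousLinearMap.smul_apply, L_apply, smul_eq_mul]
  push_cast
  ring_nf

lemma pderivY_toFun (p : STP) (r : ℝ × ℝ) : pderivY p.toFun r = (dyP p).toFun r := by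
  rw [pderivY, (hasFDerivAt_toFun p r).fderiv]
  rw [ContinuousLinearMap.sum_apply]
  rw [dyP, STP.toFun]
  refine Finset.sum_congr rfl fun k _ => ?_
  simp only [ContinuousLinearMap.smul_apply, L_apply, smul_eq_mul]
  push_cast
  ring_nf

/-- offsets -/
def M1 (p : STP) : ℕ := p.Λ.sup fun k => k.1.natAbs
def M2 (p : STP) : ℕ := p.Λ.sup fun k => k.2.natAbs

lemma M1_le {p : STP} {k : ℤ × ℤ} (hk : k ∈ p.Λ) : (0:ℤ) ≤ k.1 + M1 p := by
  have := Finset.le_sup (f := fun k : ℤ×ℤ => k.1.natAbs) hk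
  have : k.1.natAbs ≤ M1 p := this
  omega

lemma M2_le {p : STP} {k : ℤ × ℤ} (hk : k ∈ p.Λ) : (0:ℤ) ≤ k.2 + M2 p := by
  have : k.2.natAbs ≤ M2 p := Finset.le_sup (f := fun k : ℤ×ℤ => k.2.natAbs) hk
  omega

/-- the polynomial attached to an STP -/
def poly (p : STP) : RW :=
  ∑ k ∈ p.Λ, Polynomial.C (Polynomial.C (p.c k) * X ^ (k.1 + M1 p).toNat) * X ^ (k.2 + M2 p).toNat

/-- main evaluation formula -/
lemma toFun_eval (p : STP) (x y : ℝ) :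
    p.toFun (x, y) = ex ((p.σ.1 - M1 p) * x) * ex ((p.σ.2 - M2 p) * y) *
      ee (ex x) (ex y) (poly p) := by
  rw [STP.toFun, poly, map_sum, Finset.mul_sum]
  refine Finset.sum_congr rfl fun k hk => ?_
  have h1 : ((k.1 + (M1 p : ℤ)).toNat : ℝ) = (k.1 : ℝ) + M1 p := by
    have := M1_le hk
    rw [show ((k.1 + (M1 p:ℤ)).toNat :ℝ) = (((k.1 + (M1 p:ℤ)).toNat : ℤ):ℝ) by norm_cast,
      Int.toNat_of_nonneg this]
    push_cast; ring
  have h2 : ((k.2 + (M2 p : ℤ)).toNat : ℝ) = (k.2 : ℝ) + M2 p := by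
    have := M2_le hk
    rw [show ((k.2 + (M2 p:ℤ)).toNat :ℝ) = (((k.2 + (M2 p:ℤ)).toNat : ℤ):ℝ) by norm_cast,
      Int.toNat_of_nonneg this]
    push_cast; ring
  have hee : ee (ex x) (ex y) (Polynomial.C (Polynomial.C (p.c k) * X ^ (k.1 + M1 p).toNat) * X ^ (k.2 + M2 p).toNat)
      = p.c k * ex x ^ (k.1 + M1 p).toNat * ex y ^ (k.2 + M2 p).toNat := by
    simp [ee, mul_assoc]
  rw [hee, ← ex_nat_mul, ← ex_nat_mul, h1, h2]
  rw [ex, ex, ex, ex]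
  rw [show ∀ a b c' d : ℂ, Complex.exp a * Complex.exp b * (p.c k * Complex.exp c' * Complex.exp d)
      = p.c k * Complex.exp (a + c' + (b + d)) by
    intros; rw [Complex.exp_add, Complex.exp_add, Complex.exp_add]; ring]
  congr 2
  push_cast
  ring

/-- inner derivative (w.r.t. the z-variable) -/
def dz (Q : RW) : RW := Q.sum fun n a => Polynomial.C (derivative a) * X ^ n

lemma coeff_dz (Q : RW) (j : ℕ) : (dz Q).coeff j = derivative (Q.coeff j) := by
  rw [dz, Polynomial.sum, finset_sum_coeff]
  simp only [Polynomial.C_mul_X_pow_eq_monomial, Polynomial.coeff_monomial]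
  rw [Finset.sum_ite_eq' Q.support j (fun n => derivative (Q.coeff n))]
  by_cases hj : j ∈ Q.support
  · simp [hj]
  · simp [hj, Polynomial.notMem_support_iff.mp hj]

lemma X_mul_deriv {T : Type} [CommSemiring T] (g : T) (b : ℕ) :
    (X : Polynomial T) * derivative (Polynomial.C g * X ^ b)
      = Polynomial.C ((b : T)) * (Polynomial.C g * X ^ b) := by
  rw [derivative_C_mul, derivative_X_pow]
  cases b with
  | zero => simp
  | succ n =>
    simp only [Nat.add_sub_cancel, pow_succ]
    push_cast
    ring

lemma poly_dyP (p : STP) :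
    poly (dyP p) = Polynomial.C (Polynomial.C (2*(Real.pi:ℂ)*Complex.I)) *
      (X * derivative (poly p) +
        Polynomial.C (Polynomial.C (((p.σ.2 : ℝ) - M2 p : ℝ) : ℂ)) * poly p) := by
  rw [poly, poly, derivative_sum, Finset.mul_sum, Finset.mul_sum, ← Finset.sum_add_distrib,
    Finset.mul_sum]
  refine Finset.sum_congr rfl fun k hk => ?_
  rw [X_mul_deriv]
  have hb : (((k.2 + (M2 p:ℤ)).toNat : ℂ)) = (k.2 : ℂ) + (M2 p : ℂ) := by
    have := M2_le hk
    rw [show (((k.2 + (M2 p:ℤ)).toNat : ℂ)) = (((k.2 + (M2 p:ℤ)).toNat : ℤ) : ℂ) by norm_cast,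
      Int.toNat_of_nonneg this]
    push_cast; ring
  have : (dyP p).c k = p.c k * (2*(Real.pi:ℂ)*Complex.I * ((k.2:ℂ) + (p.σ.2:ℂ))) := rfl
  rw [this]
  have hM : M1 (dyP p) = M1 p := rfl
  have hM2 : M2 (dyP p) = M2 p := rfl
  rw [hM, hM2,
    show ((((k.2 + (M2 p:ℤ)).toNat : ℕ)) : RR) = Polynomial.C (((k.2 + (M2 p:ℤ)).toNat : ℂ)) from
      (Polynomial.C_eq_natCast _).symm, hb]
  push_cast
  simp only [Polynomial.C_mul, Polynomial.C_add, Polynomial.C_sub]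
  ring

lemma dz_monomial (g : RR) (b : ℕ) :
    dz (Polynomial.C g * X ^ b) = Polynomial.C (derivative g) * X ^ b := by
  rw [Polynomial.C_mul_X_pow_eq_monomial, dz, Polynomial.sum_monomial_index,
    Polynomial.C_mul_X_pow_eq_monomial]
  simp

lemma dz_sum {α : Type} (s : Finset α) (f : α → RW) : dz (∑ i ∈ s, f i) = ∑ i ∈ s, dz (f i) := by
  refine Polynomial.ext fun j => ?_
  rw [coeff_dz, finset_sum_coeff, map_sum, finset_sum_coeff]
  exact Finset.sum_congr rfl fun i _ => (coeff_dz (f i) j).symm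

lemma poly_dxP (p : STP) :
    poly (dxP p) = Polynomial.C (Polynomial.C (2*(Real.pi:ℂ)*Complex.I)) *
      (Polynomial.C X * dz (poly p) +
        Polynomial.C (Polynomial.C (((p.σ.1 : ℝ) - M1 p : ℝ) : ℂ)) * poly p) := by
  rw [poly, poly, dz_sum, Finset.mul_sum, Finset.mul_sum, ← Finset.sum_add_distrib,
    Finset.mul_sum]
  refine Finset.sum_congr rfl fun k hk => ?_
  rw [dz_monomial, show (Polynomial.C (X:RR) * (Polynomial.C (derivative (Polynomial.C (p.c k) * X ^ (k.1 + ↑(M1 p)).toNat)) * X ^ (k.2 + ↑(M2 p)).toNat)) = Polynomial.C ((X:RR) * derivative (Polynomial.C (p.c k) * X ^ (k.1 + ↑(M1 p)).toNat)) * X ^ (k.2 + ↑(M2 p)).toNat by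
      rw [Polynomial.C_mul]; ring]
  rw [X_mul_deriv]
  have hb : (((k.1 + (M1 p:ℤ)).toNat : ℂ)) = (k.1 : ℂ) + (M1 p : ℂ) := by
    have := M1_le hk
    rw [show (((k.1 + (M1 p:ℤ)).toNat : ℂ)) = (((k.1 + (M1 p:ℤ)).toNat : ℤ) : ℂ) by norm_cast,
      Int.toNat_of_nonneg this]
    push_cast; ring
  have : (dxP p).c k = p.c k * (2*(Real.pi:ℂ)*Complex.I * ((k.1:ℂ) + (p.σ.1:ℂ))) := rfl
  rw [this]
  have hM : M1 (dxP p) = M1 p := rfl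
  have hM2 : M2 (dxP p) = M2 p := rfl
  rw [hM, hM2, hb]
  push_cast
  simp only [Polynomial.C_mul, Polynomial.C_add, Polynomial.C_sub]
  ring

lemma sq_dvd_of_double_root (g : RR) (z₀ : ℂ) (h0 : g.eval z₀ = 0)
    (h1 : (derivative g).eval z₀ = 0) : (X - Polynomial.C z₀)^2 ∣ g := by
  obtain ⟨q, hq⟩ := (dvd_iff_isRoot (p := g)).mpr h0
  rw [hq, derivative_mul] at h1
  simp only [derivative_X_sub_C, one_mul, eval_add, eval_mul, eval_sub, eval_X, eval_C,
    sub_self, zero_mul, add_zero] at h1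
  obtain ⟨q', hq'⟩ := (dvd_iff_isRoot (p := q)).mpr h1
  exact ⟨q', by rw [hq, hq', pow_two]; ring⟩

lemma C_dvd_of_coeff_dvd (d : RR) (Q : RW) (h : ∀ j, d ∣ Q.coeff j) : Polynomial.C d ∣ Q := by
  conv_rhs => rw [Q.as_sum_support]
  apply Finset.dvd_sum
  intro i _
  obtain ⟨e, he⟩ := h i
  exact ⟨monomial i e, by rw [he, C_mul_monomial]⟩

lemma coeff_dvd_of_C_dvd (d : RR) (Q : RW) (h : Polynomial.C d ∣ Q) (j : ℕ) : d ∣ Q.coeff j := by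
  obtain ⟨K, rfl⟩ := h
  rw [coeff_C_mul]
  exact Dvd.intro _ rfl

lemma exists_strip : ∀ n : ℕ, ∀ Q : RW, Q.natDegree ≤ n → Q ≠ 0 →
    ∃ β : ℕ, ∃ F : RW, Q = X^β * F ∧ ¬ (X:RW) ∣ F := by
  intro n
  induction n with
  | zero =>
    intro Q hdeg hQ
    refine ⟨0, Q, by ring, fun hdvd => ?_⟩
    obtain ⟨Q', rfl⟩ := hdvd
    have hQ' : Q' ≠ 0 := fun h => hQ (by simp [h])
    have := Polynomial.natDegree_mul (p := (X:RW)) (q := Q') X_ne_zero hQ'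
    rw [natDegree_X] at this
    omega
  | succ n ih =>
    intro Q hdeg hQ
    by_cases hdvd : (X:RW) ∣ Q
    · obtain ⟨Q', rfl⟩ := hdvd
      have hQ' : Q' ≠ 0 := fun h => hQ (by simp [h])
      have hd := Polynomial.natDegree_mul (p := (X:RW)) (q := Q') X_ne_zero hQ'
      rw [natDegree_X] at hd
      obtain ⟨β, F, hF, hXF⟩ := ih Q' (by omega) hQ'
      exact ⟨β + 1, F, by rw [hF, pow_succ]; ring, hXF⟩
    · exact ⟨0, Q, by ring, hdvd⟩

lemma dz_X_pow_mul (β : ℕ) (F : RW) : dz ((X:RW)^β * F) = X^β * dz F := by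
  refine Polynomial.ext fun j => ?_
  rw [coeff_dz]
  rw [show (X:RW)^β * F = F * X^β from ((commute_X_pow F β).symm.eq).symm,
    show (X:RW)^β * dz F = dz F * X^β from ((commute_X_pow (dz F) β).symm.eq).symm,
    coeff_mul_X_pow', coeff_mul_X_pow']
  split_ifs with h
  · exact (coeff_dz F (j - β)).symm
  · simp

lemma bezout_clear (F : RW)
    (h : IsCoprime (F.map (algebraMap RR KK)) ((derivative F).map (algebraMap RR KK))) :
    ∃ A B : RW, ∃ d : RR, d ≠ 0 ∧ A * F + B * derivative F = Polynomial.C d := by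
  obtain ⟨A, B, hAB⟩ := h
  obtain ⟨dA, hdA⟩ := IsLocalization.integerNormalization_map_to_map (nonZeroDivisors RR) A
  obtain ⟨dB, hdB⟩ := IsLocalization.integerNormalization_map_to_map (nonZeroDivisors RR) B
  set A₁ := IsLocalization.integerNormalization (nonZeroDivisors RR) A with hA₁
  set B₁ := IsLocalization.integerNormalization (nonZeroDivisors RR) B with hB₁
  refine ⟨Polynomial.C (dB:RR) * A₁, Polynomial.C (dA:RR) * B₁, (dA:RR) * (dB:RR), ?_, ?_⟩
  · exact mul_ne_zero (nonZeroDivisors.ne_zero dA.2) (nonZeroDivisors.ne_zero dB.2)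
  · apply map_injective (algebraMap RR KK) (IsFractionRing.injective _ _)
    have hsA : A₁.map (algebraMap RR KK) = Polynomial.C (algebraMap RR KK dA) * A := by
      rw [hdA, ← Polynomial.smul_eq_C_mul, IsScalarTower.algebraMap_smul]
    have hsB : B₁.map (algebraMap RR KK) = Polynomial.C (algebraMap RR KK dB) * B := by
      rw [hdB, ← Polynomial.smul_eq_C_mul, IsScalarTower.algebraMap_smul]
    rw [Polynomial.map_add, Polynomial.map_mul, Polynomial.map_mul, Polynomial.map_mul,
      Polynomial.map_mul, hsA, hsB]
    rw [Polynomial.map_C, Polynomial.map_C, Polynomial.map_C]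
    rw [map_mul]
    calc Polynomial.C (algebraMap RR KK dB) * (Polynomial.C (algebraMap RR KK dA) * A) * F.map (algebraMap RR KK) +
          Polynomial.C (algebraMap RR KK dA) * (Polynomial.C (algebraMap RR KK dB) * B) * (derivative F).map (algebraMap RR KK)
        = Polynomial.C (algebraMap RR KK dA) * Polynomial.C (algebraMap RR KK dB) *
            (A * F.map (algebraMap RR KK) + B * (derivative F).map (algebraMap RR KK)) := by ring
      _ = Polynomial.C (algebraMap RR KK dA) * Polynomial.C (algebraMap RR KK dB) := by rw [hAB, mul_one]
      _ = Polynomial.C (algebraMap RR KK dA * algebraMap RR KK dB) := by rw [Polynomial.C_mul]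

lemma dvd_of_map_dvd (π G : RW) (hπ : Prime π) (hdeg : 0 < π.natDegree)
    (h : π.map (algebraMap RR KK) ∣ G.map (algebraMap RR KK)) : π ∣ G := by
  obtain ⟨T, hT⟩ := h
  obtain ⟨e, he⟩ := IsLocalization.integerNormalization_map_to_map (nonZeroDivisors RR) T
  set T₁ := IsLocalization.integerNormalization (nonZeroDivisors RR) T
  have he' : T₁.map (algebraMap RR KK) = Polynomial.C (algebraMap RR KK e) * T := by
    rw [he, ← Polynomial.smul_eq_C_mul, IsScalarTower.algebraMap_smul]
  have hkey : Polynomial.C (e:RR) * G = π * T₁ := by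
    apply map_injective (algebraMap RR KK) (IsFractionRing.injective _ _)
    rw [Polynomial.map_mul, Polynomial.map_mul, he', Polynomial.map_C, hT]
    ring
  have : π ∣ Polynomial.C (e:RR) * G := ⟨T₁, hkey⟩
  rcases (hπ.2.2 _ _ this) with hCe | hG
  · exfalso
    have hCe0 : (Polynomial.C (e:RR) : RW) ≠ 0 := by
      simp [Polynomial.C_eq_zero, nonZeroDivisors.ne_zero e.2]
    have := Polynomial.natDegree_le_of_dvd hCe hCe0
    simp [Polynomial.natDegree_C] at this
    omega
  · exact hG

lemma exists_prime_sq_dvd (F : RW) (hF : F ≠ 0)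
    (h : ¬ IsCoprime (F.map (algebraMap RR KK)) ((derivative F).map (algebraMap RR KK))) :
    ∃ π : RW, Prime π ∧ 0 < π.natDegree ∧ π * π ∣ F := by
  classical
  set φ := algebraMap RR KK
  have hinj : Function.Injective φ := IsFractionRing.injective _ _
  have hmapF : F.map φ ≠ 0 := by
    rw [Polynomial.map_ne_zero_iff hinj]; exact hF
  -- a common irreducible factor in KK[X]
  have hgu : ¬ IsUnit (EuclideanDomain.gcd (F.map φ) ((derivative F).map φ)) := by
    intro h'
    exact h (EuclideanDomain.gcd_isUnit_iff.mp h')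
  have hg0 : EuclideanDomain.gcd (F.map φ) ((derivative F).map φ) ≠ 0 := by
    intro h'
    exact hmapF ((EuclideanDomain.gcd_eq_zero_iff.mp h').1)
  obtain ⟨q, hqirr, hqdvd⟩ := WfDvdMonoid.exists_irreducible_factor hgu hg0
  have hq1 : q ∣ F.map φ := hqdvd.trans (EuclideanDomain.gcd_dvd_left _ _)
  have hq2 : q ∣ (derivative F).map φ := hqdvd.trans (EuclideanDomain.gcd_dvd_right _ _)
  have hq0 : q ≠ 0 := hqirr.ne_zero
  -- pull back to RW
  obtain ⟨d, hd⟩ := IsLocalization.integerNormalization_map_to_map (nonZeroDivisors RR) q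
  set q₁ := IsLocalization.integerNormalization (nonZeroDivisors RR) q with hq₁def
  have hd' : q₁.map φ = Polynomial.C (φ d) * q := by
    rw [hd, ← Polynomial.smul_eq_C_mul, IsScalarTower.algebraMap_smul]
  have hφd : φ (d:RR) ≠ 0 := fun h' => nonZeroDivisors.ne_zero d.2 (hinj (by simpa using h'))
  have hq₁0 : q₁ ≠ 0 := by
    intro h'
    rw [h', Polynomial.map_zero] at hd'
    exact (mul_ne_zero (by simpa using hφd) hq0) hd'.symm
  set π := q₁.primPart with hπdef
  have hprim : π.IsPrimitive := q₁.isPrimitive_primPart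
  have hcontent : φ q₁.content ≠ 0 := fun h' =>
    (Polynomial.content_eq_zero_iff.not.mpr hq₁0) (hinj (by simpa using h'))
  have hmapπ : Polynomial.C (φ q₁.content) * π.map φ = Polynomial.C (φ d) * q := by
    rw [← hd', ← Polynomial.map_C, ← Polynomial.map_mul, ← Polynomial.eq_C_content_mul_primPart]
  set k := φ (d:RR) / φ q₁.content with hkdef
  have hk : k ≠ 0 := div_ne_zero hφd hcontent
  have hπq : π.map φ = Polynomial.C k * q := by
    apply mul_left_cancel₀ (show (Polynomial.C (φ q₁.content) : Polynomial KK) ≠ 0 by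
      simpa using hcontent)
    rw [hmapπ, ← mul_assoc, ← Polynomial.C_mul, hkdef, mul_div_cancel₀ _ hcontent]
  have hCk : IsUnit (Polynomial.C k : Polynomial KK) :=
    Polynomial.isUnit_C.mpr (isUnit_iff_ne_zero.mpr hk)
  have hassoc : Associated q (π.map φ) := by
    obtain ⟨u, hu⟩ := hCk
    exact ⟨u, by rw [hπq, ← hu]; ring⟩
  have hmapirr : Irreducible (π.map φ) := hassoc.irreducible hqirr
  have hirrπ : Irreducible π := hprim.irreducible_of_irreducible_map_of_injective hinj hmapirr
  have hπprime : Prime π := (UniqueFactorizationMonoid.irreducible_iff_prime).mp hirrπ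
  have hqdeg : 0 < q.natDegree := by
    rcases Nat.eq_zero_or_pos q.natDegree with h0 | h1
    · exfalso
      have hqC := Polynomial.eq_C_of_natDegree_eq_zero h0
      have : q.coeff 0 ≠ 0 := fun hc => hq0 (by rw [hqC, hc, Polynomial.C_0])
      exact hqirr.not_isUnit (hqC ▸ Polynomial.isUnit_C.mpr (isUnit_iff_ne_zero.mpr this))
    · exact h1
  have hdeg : 0 < π.natDegree := by
    have h1 : (π.map φ).natDegree = π.natDegree := Polynomial.natDegree_map_eq_of_injective hinj π
    have h2 : (π.map φ).natDegree = q.natDegree := by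
      rw [hπq, Polynomial.natDegree_mul (fun hc => hk (by simpa using hc)) hq0,
        Polynomial.natDegree_C]
      omega
    omega
  have hmapdvd : ∀ G : RW, q ∣ G.map φ → π ∣ G := by
    intro G hqG
    apply dvd_of_map_dvd π G hπprime hdeg
    obtain ⟨T, hT⟩ := hqG
    obtain ⟨u, hu⟩ := hCk
    refine ⟨(u⁻¹ : (Polynomial KK)ˣ) * T, ?_⟩
    rw [hT, hπq, ← hu]
    calc q * T = (↑u * ↑u⁻¹ : Polynomial KK) * (q * T) := by
          rw [Units.mul_inv]; ring
      _ = ↑u * q * (↑u⁻¹ * T) := by ring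
  have hπF : π ∣ F := hmapdvd F hq1
  have hπF' : π ∣ derivative F := hmapdvd (derivative F) hq2
  obtain ⟨H, hH⟩ := hπF
  have hdF : derivative F = derivative π * H + π * derivative H := by
    rw [hH, derivative_mul]
  have hdiv : π ∣ derivative π * H := by
    have : derivative π * H = derivative F - π * derivative H := by rw [hdF]; ring
    rw [this]
    exact dvd_sub hπF' ⟨derivative H, rfl⟩
  have hdπ0 : derivative π ≠ 0 := by
    intro h0
    have := Polynomial.natDegree_eq_zero_of_derivative_eq_zero h0
    omega
  rcases hπprime.2.2 _ _ hdiv with hbad | hgood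
  · exfalso
    have h1 := Polynomial.natDegree_le_of_dvd hbad hdπ0
    have h2 := Polynomial.natDegree_derivative_lt (show π.natDegree ≠ 0 by omega)
    omega
  · obtain ⟨H₂, hH₂⟩ := hgood
    exact ⟨π, hπprime, hdeg, H₂, by rw [hH, hH₂]; ring⟩

lemma Sset_finite (F : RW) (hF : F ≠ 0) (hXF : ¬ (X:RW) ∣ F)
    (diamond : ∀ G : RW, G ≠ 0 →
      (∀ x y : ℝ, ee (ex x) (ex y) F = 0 → ee (ex x) (ex y) G = 0) →
      ∃ a b : ℕ, ∃ K : RW, (Polynomial.C (X:RR))^a * (X:RW)^b * G = F * K) :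
    {w : ℂ × ℂ | (∃ x : ℝ, ex x = w.1) ∧ (∃ y : ℝ, ex y = w.2) ∧ ee w.1 w.2 F = 0 ∧
      ee w.1 w.2 (dz F) = 0 ∧ ee w.1 w.2 (derivative F) = 0}.Finite := by
  set S : Set (ℂ × ℂ) := {w : ℂ × ℂ | (∃ x : ℝ, ex x = w.1) ∧ (∃ y : ℝ, ex y = w.2) ∧
    ee w.1 w.2 F = 0 ∧ ee w.1 w.2 (dz F) = 0 ∧ ee w.1 w.2 (derivative F) = 0} with hSdef
  -- step 1 : each vertical line contains finitely many points of S
  have hline : ∀ u : ℂ, {v : ℂ | (u, v) ∈ S}.Finite := by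
    intro u
    by_contra hfin
    have hinf : {v : ℂ | (u, v) ∈ S}.Infinite := hfin
    have hu0 : u ≠ 0 := by
      obtain ⟨v, hv⟩ := hinf.nonempty
      obtain ⟨⟨x, hx⟩, -⟩ := hv
      intro h0
      exact ex_ne_zero x (by simpa [h0] using hx)
    have hmapF : F.map (evalRingHom u) = 0 := by
      apply Polynomial.eq_zero_of_infinite_isRoot
      apply hinf.mono
      intro v hv
      exact hv.2.2.1
    have hmapdz : (dz F).map (evalRingHom u) = 0 := by
      apply Polynomial.eq_zero_of_infinite_isRoot
      apply hinf.mono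
      intro v hv
      exact hv.2.2.2.1
    have hcoeff : ∀ j, ((X : RR) - Polynomial.C u)^2 ∣ F.coeff j := by
      intro j
      apply sq_dvd_of_double_root
      · have := congrArg (fun P => P.coeff j) hmapF
        simpa [Polynomial.coeff_map] using this
      · have := congrArg (fun P => P.coeff j) hmapdz
        simp only [Polynomial.coeff_map, Polynomial.coeff_zero] at this
        rw [coeff_dz] at this
        simpa using this
    obtain ⟨F₁, hF₁⟩ := C_dvd_of_coeff_dvd _ F hcoeff
    set s : RW := Polynomial.C ((X : RR) - Polynomial.C u) with hsdef
    have hF₁' : F = s^2 * F₁ := by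
      rw [hF₁, hsdef, ← Polynomial.C_pow]
    have hs0 : s ≠ 0 := by
      simp only [hsdef, Ne, Polynomial.C_eq_zero]
      exact Polynomial.X_sub_C_ne_zero u
    have hF₁0 : F₁ ≠ 0 := by
      intro h0
      rw [h0, mul_zero] at hF₁'
      exact hF hF₁'
    have hvan : ∀ x y : ℝ, ee (ex x) (ex y) F = 0 → ee (ex x) (ex y) (s * F₁) = 0 := by
      intro x y hxy
      rw [hF₁'] at hxy
      rw [map_mul] at hxy ⊢
      rcases mul_eq_zero.mp hxy with h1 | h2
      · rw [map_pow] at h1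
        rw [pow_eq_zero_iff (by norm_num : 2 ≠ 0)] at h1
        rw [h1, zero_mul]
      · rw [h2, mul_zero]
    obtain ⟨a, b, K, hK⟩ := diamond (s * F₁) (mul_ne_zero hs0 hF₁0) hvan
    · -- derive contradiction
      rw [hF₁'] at hK
      have hcancel : (Polynomial.C (X:RR))^a * (X:RW)^b = s * K := by
        have h1 : ((Polynomial.C (X:RR))^a * (X:RW)^b) * (s * F₁) = (s * K) * (s * F₁) := by
          rw [hK]; ring
        exact mul_right_cancel₀ (mul_ne_zero hs0 hF₁0) h1
      have hmap := congrArg (Polynomial.map (evalRingHom u)) hcancel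
      rw [Polynomial.map_mul, Polynomial.map_mul, Polynomial.map_pow, Polynomial.map_pow,
        Polynomial.map_C, Polynomial.map_X] at hmap
      simp only [hsdef, Polynomial.map_C, coe_evalRingHom, Polynomial.eval_sub,
        Polynomial.eval_X, Polynomial.eval_C, sub_self, Polynomial.C_0, zero_mul] at hmap
      exact (mul_ne_zero (pow_ne_zero _ (fun hc => hu0 (by simpa using hc)))
        (pow_ne_zero _ (Polynomial.X_ne_zero : (X : Polynomial ℂ) ≠ 0))) hmap
  -- step 2 : if S were infinite, its first projection would be infinite
  by_contra hSfin
  have hSinf : S.Infinite := hSfin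
  have hfst : (Prod.fst '' S).Infinite := by
    intro hfstfin
    apply hSinf
    have : S ⊆ ⋃ u ∈ Prod.fst '' S, (fun v => (u, v)) '' {v | (u, v) ∈ S} := by
      rintro ⟨u, v⟩ hw
      simp only [Set.mem_iUnion]
      exact ⟨u, ⟨⟨u,v⟩, hw, rfl⟩, ⟨v, hw, rfl⟩⟩
    exact (hfstfin.biUnion (fun u _ => (hline u).image _)).subset this
  -- the elements of the first projection are nonzero roots wherever needed
  have hfst_root : ∀ d : RR, d ≠ 0 → (∀ u ∈ Prod.fst '' S, d.eval u = 0) → False := by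
    intro d hd hroots
    apply hd
    apply Polynomial.eq_zero_of_infinite_isRoot
    exact hfst.mono fun u hu => hroots u hu
  -- main case split
  by_cases hdeg0 : F.natDegree = 0
  · have hFC := Polynomial.eq_C_of_natDegree_eq_zero hdeg0
    apply hfst_root (F.coeff 0) (fun hc => hF (by rw [hFC, hc, Polynomial.C_0]))
    rintro u ⟨⟨u', v⟩, hw, rfl⟩
    have := hw.2.2.1
    rw [hFC] at this
    simpa using this
  by_cases hco : IsCoprime (F.map (algebraMap RR KK)) ((derivative F).map (algebraMap RR KK))
  · obtain ⟨A, B, d, hd, hABd⟩ := bezout_clear F hco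
    apply hfst_root d hd
    rintro u ⟨⟨u', v⟩, hw, rfl⟩
    have := congrArg (ee u' v) hABd
    rw [map_add, map_mul, map_mul, hw.2.2.1, hw.2.2.2.2, ee_C] at this
    simpa using this.symm
  · obtain ⟨π, hπ, hπdeg, H₂, hH₂⟩ := exists_prime_sq_dvd F hF hco
    have hπ0 : π ≠ 0 := hπ.ne_zero
    have hH₂0 : H₂ ≠ 0 := by
      intro h0
      rw [h0, mul_zero] at hH₂
      exact hF hH₂
    have hvan : ∀ x y : ℝ, ee (ex x) (ex y) F = 0 → ee (ex x) (ex y) (π * H₂) = 0 := by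
      intro x y hxy
      rw [hH₂] at hxy
      rw [map_mul] at hxy ⊢
      rw [map_mul] at hxy
      rcases mul_eq_zero.mp hxy with h1 | h2
      · rcases mul_eq_zero.mp h1 with h1a | h1b
        · rw [h1a, zero_mul]
        · rw [h1b, zero_mul]
      · rw [h2, mul_zero]
    obtain ⟨a, b, K, hK⟩ := diamond (π * H₂) (mul_ne_zero hπ0 hH₂0) hvan
    · rw [hH₂] at hK
      have hcancel : (Polynomial.C (X:RR))^a * (X:RW)^b = π * K := by
        have h1 : ((Polynomial.C (X:RR))^a * (X:RW)^b) * (π * H₂) = (π * K) * (π * H₂) := by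
          rw [hK]; ring
        exact mul_right_cancel₀ (mul_ne_zero hπ0 hH₂0) h1
      have hdvd : π ∣ (Polynomial.C (X:RR))^a * (X:RW)^b := ⟨K, hcancel⟩
      rcases hπ.2.2 _ _ hdvd with h1 | h2
      · rcases hπ.dvd_of_dvd_pow h1 with hx
        have h1' := Polynomial.natDegree_le_of_dvd hx (by
          simp only [Ne, Polynomial.C_eq_zero]
          exact Polynomial.X_ne_zero)
        rw [Polynomial.natDegree_C] at h1'
        omega
      · have hx : π ∣ (X : RW) := hπ.dvd_of_dvd_pow h2
        obtain ⟨c, hc⟩ := hx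
        rcases (Polynomial.prime_X (R := RR)).irreducible.isUnit_or_isUnit hc with hu | hu
        · exact hπ.not_unit hu
        · apply hXF
          have : (X : RW) ∣ π := by
            obtain ⟨cu, hcu⟩ := hu
            exact ⟨(cu⁻¹ : RWˣ), by rw [hc, ← hcu]; simp [mul_assoc]⟩
          exact this.trans ⟨π * H₂, by rw [hH₂]; ring⟩
/-- the STP attached to a two-variable polynomial -/
def qSTP (G : RW) : STP where
  σ := (0, 0)
  hσ1 := Or.inl rfl
  hσ2 := Or.inl rfl
  Λ := ((Finset.range ((Finset.range (G.natDegree + 1)).sup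
      (fun j => (G.coeff j).natDegree) + 1)) ×ˢ Finset.range (G.natDegree + 1)).image
      (fun ab => ((ab.1 : ℤ), (ab.2 : ℤ)))
  c := fun k => if 0 ≤ k.1 ∧ 0 ≤ k.2 then (G.coeff k.2.toNat).coeff k.1.toNat else 0

lemma qSTP_toFun (G : RW) (x y : ℝ) : (qSTP G).toFun (x, y) = ee (ex x) (ex y) G := by
  set D := (Finset.range (G.natDegree + 1)).sup (fun j => (G.coeff j).natDegree) with hD
  rw [STP.toFun, qSTP]
  rw [Finset.sum_image (by
    intro a _ b _ hab
    have h1 := congrArg Prod.fst hab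
    have h2 := congrArg Prod.snd hab
    simp only at h1 h2
    exact Prod.ext (by exact_mod_cast h1) (by exact_mod_cast h2))]
  rw [Finset.sum_product]
  have hdeg1 : (G.map (evalRingHom (ex x))).natDegree < G.natDegree + 1 :=
    lt_of_le_of_lt (natDegree_map_le) (Nat.lt_succ_self _)
  have hR : ee (ex x) (ex y) G = ∑ j ∈ Finset.range (G.natDegree + 1),
      ∑ i ∈ Finset.range (D + 1), ((G.coeff j).coeff i) * (ex x)^i * (ex y)^j := by
    rw [ee_apply, eval_eq_sum_range' hdeg1]
    refine Finset.sum_congr rfl fun j hj => ?_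
    have hdegj : (G.coeff j).natDegree < D + 1 := by
      have : (G.coeff j).natDegree ≤ D :=
        Finset.le_sup (f := fun j => (G.coeff j).natDegree) hj
      omega
    rw [coeff_map, coe_evalRingHom, eval_eq_sum_range' hdegj, Finset.sum_mul]
  have hR2 : ee (ex x) (ex y) G = ∑ i ∈ Finset.range (D + 1),
      ∑ j ∈ Finset.range (G.natDegree + 1), ((G.coeff j).coeff i) * (ex x)^i * (ex y)^j := by
    rw [hR]
    exact Finset.sum_comm
  rw [hR2]
  refine Finset.sum_congr rfl fun i _ => Finset.sum_congr rfl fun j _ => ?_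
  simp only [Int.toNat_natCast]
  rw [if_pos ⟨by positivity, by positivity⟩]
  rw [← ex_nat_mul, ← ex_nat_mul]
  simp only [ex]
  rw [show ∀ c a b : ℂ, c * Complex.exp a * Complex.exp b = c * Complex.exp (a + b) by
    intros; rw [Complex.exp_add]; ring]
  congr 2
  push_cast
  ring
lemma poly_ne (p : STP) (hp : p.toFun ≠ 0) : poly p ≠ 0 := by
  intro h0
  apply hp
  funext r
  rw [← Prod.mk.eta (p := r), toFun_eval, h0, map_zero, mul_zero]
  rfl

lemma pow_zpow (u : ℂ) (hu : u ≠ 0) (n : ℤ) :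
    u ^ n.natAbs * u ^ n = u ^ ((n + n.natAbs).toNat) := by
  rw [← zpow_natCast u n.natAbs, ← zpow_add₀ hu, ← zpow_natCast u ((n + n.natAbs).toNat)]
  congr 1
  omega

lemma int_of_ex_eq_one {α : ℝ} (h : ex α = 1) : ∃ n : ℤ, α = (n : ℝ) := by
  rw [exp_ex, Complex.exp_eq_one_iff] at h
  obtain ⟨n, hn⟩ := h
  refine ⟨n, ?_⟩
  have h2 : (2 * (Real.pi:ℂ) * Complex.I) ≠ 0 := by
    simp [Real.pi_ne_zero, Complex.I_ne_zero]
  have : ((α:ℝ):ℂ) = (n:ℂ) := by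
    apply mul_left_cancel₀ h2
    rw [hn]; ring
  exact_mod_cast this

lemma diamond_main (p : STP) (C : Set (ℝ × ℝ)) (hp0 : p.toFun ≠ 0)
    (hCz : C = p.zeroSet)
    (hmin : ∀ q : STP, q.toFun ≠ 0 → (∀ r ∈ C, q.toFun r = 0) → DividesS p.toFun q.toFun)
    (β : ℕ) (F : RW) (hPF : poly p = (X:RW)^β * F) :
    ∀ G : RW, G ≠ 0 → (∀ x y : ℝ, ee (ex x) (ex y) F = 0 → ee (ex x) (ex y) G = 0) →
    ∃ a b : ℕ, ∃ K : RW, (Polynomial.C (X:RR))^a * (X:RW)^b * G = F * K := by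
  intro G hG0 hGvan
  have hq0 : (qSTP G).toFun ≠ 0 := by
    intro h0
    apply hG0
    apply zero_of_ee_zero
    intro x y
    rw [← qSTP_toFun]
    exact congrFun h0 (x, y)
  have hqvan : ∀ r ∈ C, (qSTP G).toFun r = 0 := by
    intro r hr
    rw [hCz] at hr
    obtain ⟨hbox, hpr⟩ := hr
    have h1 : p.toFun (r.1, r.2) = 0 := by rw [Prod.mk.eta]; exact hpr
    rw [toFun_eval] at h1
    have h2 : ee (ex r.1) (ex r.2) (poly p) = 0 := by
      rcases mul_eq_zero.mp h1 with h | h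
      · rcases mul_eq_zero.mp h with h' | h'
        · exact absurd h' (ex_ne_zero _)
        · exact absurd h' (ex_ne_zero _)
      · exact h
    rw [hPF, map_mul, map_pow, ee_X] at h2
    have h3 : ee (ex r.1) (ex r.2) F = 0 := by
      rcases mul_eq_zero.mp h2 with h | h
      · exact absurd h (pow_ne_zero _ (ex_ne_zero _))
      · exact h
    have h4 := hGvan r.1 r.2 h3
    rw [← qSTP_toFun] at h4
    rw [Prod.mk.eta] at h4
    exact h4
  obtain ⟨η, hη0, heq⟩ := hmin (qSTP G) hq0 hqvan
  have hpolyp : poly p ≠ 0 := poly_ne p hp0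
  have hpolyη : poly η ≠ 0 := poly_ne η hη0
  have hD0 : poly p * poly η ≠ 0 := mul_ne_zero hpolyp hpolyη
  have hid : ∀ x y : ℝ, ee (ex x) (ex y) G =
      ex (((p.σ.1 - M1 p) + (η.σ.1 - M1 η)) * x) * ex (((p.σ.2 - M2 p) + (η.σ.2 - M2 η)) * y) *
        ee (ex x) (ex y) (poly p * poly η) := by
    intro x y
    have h1 := congrFun heq (x, y)
    rw [qSTP_toFun, toFun_eval, toFun_eval] at h1
    rw [h1, map_mul]
    rw [show ((p.σ.1 - M1 p) + (η.σ.1 - M1 η)) * x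
        = (p.σ.1 - M1 p) * x + (η.σ.1 - M1 η) * x by ring, ex_add]
    rw [show ((p.σ.2 - M2 p) + (η.σ.2 - M2 η)) * y
        = (p.σ.2 - M2 p) * y + (η.σ.2 - M2 η) * y by ring, ex_add]
    ring
  have hpt : ∃ x y : ℝ, ee (ex x) (ex y) (poly p * poly η) ≠ 0 := by
    by_contra hno
    push_neg at hno
    exact hD0 (zero_of_ee_zero _ fun x y => hno x y)
  obtain ⟨x₀, y₀, hxy0⟩ := hpt
  set A : ℝ := (p.σ.1 - M1 p) + (η.σ.1 - M1 η) with hAdef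
  set B : ℝ := (p.σ.2 - M2 p) + (η.σ.2 - M2 η) with hBdef
  have hT0 : ex (A * x₀) * ex (B * y₀) * ee (ex x₀) (ex y₀) (poly p * poly η) ≠ 0 :=
    mul_ne_zero (mul_ne_zero (ex_ne_zero _) (ex_ne_zero _)) hxy0
  have hexA : ex A = 1 := by
    have e1 := hid x₀ y₀
    have e2 := hid (x₀ + 1) y₀
    rw [ex_add_one, show A * (x₀ + 1) = A * x₀ + A by ring, ex_add] at e2
    have h5 : ex A * (ex (A * x₀) * ex (B * y₀) * ee (ex x₀) (ex y₀) (poly p * poly η))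
        = (1:ℂ) * (ex (A * x₀) * ex (B * y₀) * ee (ex x₀) (ex y₀) (poly p * poly η)) := by
      rw [one_mul]
      calc ex A * (ex (A * x₀) * ex (B * y₀) * ee (ex x₀) (ex y₀) (poly p * poly η))
          = ex (A * x₀) * ex A * ex (B * y₀) * ee (ex x₀) (ex y₀) (poly p * poly η) := by ring
        _ = ee (ex x₀) (ex y₀) G := e2.symm
        _ = ex (A * x₀) * ex (B * y₀) * ee (ex x₀) (ex y₀) (poly p * poly η) := e1
    exact mul_right_cancel₀ hT0 h5
  have hexB : ex B = 1 := by
    have e1 := hid x₀ y₀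
    have e2 := hid x₀ (y₀ + 1)
    rw [ex_add_one, show B * (y₀ + 1) = B * y₀ + B by ring, ex_add] at e2
    have h5 : ex B * (ex (A * x₀) * ex (B * y₀) * ee (ex x₀) (ex y₀) (poly p * poly η))
        = (1:ℂ) * (ex (A * x₀) * ex (B * y₀) * ee (ex x₀) (ex y₀) (poly p * poly η)) := by
      rw [one_mul]
      calc ex B * (ex (A * x₀) * ex (B * y₀) * ee (ex x₀) (ex y₀) (poly p * poly η))
          = ex (A * x₀) * (ex (B * y₀) * ex B) * ee (ex x₀) (ex y₀) (poly p * poly η) := by ring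
        _ = ee (ex x₀) (ex y₀) G := e2.symm
        _ = ex (A * x₀) * ex (B * y₀) * ee (ex x₀) (ex y₀) (poly p * poly η) := e1
    exact mul_right_cancel₀ hT0 h5
  obtain ⟨n, hn⟩ := int_of_ex_eq_one hexA
  obtain ⟨m, hm⟩ := int_of_ex_eq_one hexB
  refine ⟨n.natAbs, m.natAbs,
    (Polynomial.C (X:RR))^((n + n.natAbs).toNat) * (X:RW)^((m + m.natAbs).toNat) *
      ((X:RW)^β * poly η), ?_⟩
  have hmain : (Polynomial.C (X:RR))^(n.natAbs) * (X:RW)^(m.natAbs) * G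
      = (Polynomial.C (X:RR))^((n + n.natAbs).toNat) * (X:RW)^((m + m.natAbs).toNat) *
        (poly p * poly η) := by
    apply eq_of_ee_eq
    intro x y
    rw [map_mul, map_mul, map_mul, map_mul, map_pow, map_pow, map_pow, map_pow, ee_C, ee_X,
      eval_X, hid x y, hn, hm, ex_int_mul, ex_int_mul]
    rw [← pow_zpow (ex x) (ex_ne_zero x) n, ← pow_zpow (ex y) (ex_ne_zero y) m]
    ring
  rw [hmain, hPF]
  ring

/-- extract vanishing of the polynomial part from vanishing of the trigonometric function -/
lemma ee_poly_zero (q : STP) (x y : ℝ) (h : q.toFun (x, y) = 0) :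
    ee (ex x) (ex y) (poly q) = 0 := by
  rw [toFun_eval] at h
  rcases mul_eq_zero.mp h with h' | h'
  · rcases mul_eq_zero.mp h' with h'' | h''
    · exact absurd h'' (ex_ne_zero _)
    · exact absurd h'' (ex_ne_zero _)
  · exact h'

lemma twoPiI_ne : (2 * (Real.pi:ℂ) * Complex.I) ≠ 0 := by
  simp [Real.pi_ne_zero, Complex.I_ne_zero]

end S15

/-- If `C` is a trigonometric curve with minimal polynomial `μ`, then
the gradient of `μ` vanishes at only finitely many points of `C` in `[0,1)²`. -/
theorem stmt15 (C : Set (ℝ × ℝ)) (hC : IsTrigCurveS C) (p : STP) (hp : IsMinPolyS p C) :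
    {r : ℝ × ℝ | r ∈ Set.Ico (0:ℝ) 1 ×ˢ Set.Ico (0:ℝ) 1 ∧ p.toFun r = 0 ∧
      pderivX p.toFun r = 0 ∧ pderivY p.toFun r = 0}.Finite := by
  classical
  obtain ⟨hp0, hreal, hCz, hmin⟩ := hp
  have hP0 : S15.poly p ≠ 0 := S15.poly_ne p hp0
  obtain ⟨β, F, hPF, hXF⟩ := S15.exists_strip (S15.poly p).natDegree (S15.poly p) le_rfl hP0
  have hF0 : F ≠ 0 := fun h => hP0 (by rw [hPF, h, mul_zero])
  have hdia := S15.diamond_main p C hp0 hCz hmin β F hPF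
  have hSfin := S15.Sset_finite F hF0 hXF hdia
  have hmem : ∀ r : ℝ × ℝ, p.toFun r = 0 → pderivX p.toFun r = 0 → pderivY p.toFun r = 0 →
      ((S15.ex r.1, S15.ex r.2) : ℂ × ℂ) ∈ {w : ℂ × ℂ | (∃ x : ℝ, S15.ex x = w.1) ∧
        (∃ y : ℝ, S15.ex y = w.2) ∧ S15.ee w.1 w.2 F = 0 ∧ S15.ee w.1 w.2 (S15.dz F) = 0 ∧
        S15.ee w.1 w.2 (Polynomial.derivative F) = 0} := by
    intro r h0 hx hy
    have hu0 : S15.ex r.1 ≠ 0 := S15.ex_ne_zero _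
    have hv0 : S15.ex r.2 ≠ 0 := S15.ex_ne_zero _
    have h0' : p.toFun (r.1, r.2) = 0 := by rw [Prod.mk.eta]; exact h0
    have e0 : S15.ee (S15.ex r.1) (S15.ex r.2) (S15.poly p) = 0 := S15.ee_poly_zero p r.1 r.2 h0'
    have eF : S15.ee (S15.ex r.1) (S15.ex r.2) F = 0 := by
      rw [hPF, map_mul, map_pow, S15.ee_X] at e0
      rcases mul_eq_zero.mp e0 with h | h
      · exact absurd h (pow_ne_zero _ hv0)
      · exact h
    have e0' : S15.ee (S15.ex r.1) (S15.ex r.2) (S15.poly p) = 0 := by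
      rw [hPF, map_mul, map_pow, S15.ee_X, eF, mul_zero]
    -- x-derivative
    have hx' : (S15.dxP p).toFun (r.1, r.2) = 0 := by
      rw [← S15.pderivX_toFun, Prod.mk.eta]; exact hx
    have ex0 : S15.ee (S15.ex r.1) (S15.ex r.2) (S15.poly (S15.dxP p)) = 0 :=
      S15.ee_poly_zero _ _ _ hx'
    rw [S15.poly_dxP] at ex0
    simp only [map_mul, map_add, S15.ee_C, Polynomial.eval_C, Polynomial.eval_X] at ex0
    rw [e0', mul_zero, add_zero] at ex0
    have edz : S15.ee (S15.ex r.1) (S15.ex r.2) (S15.dz (S15.poly p)) = 0 := by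
      rcases mul_eq_zero.mp ex0 with h | h
      · exact absurd h S15.twoPiI_ne
      · rcases mul_eq_zero.mp h with h' | h'
        · exact absurd h' hu0
        · exact h'
    have edzF : S15.ee (S15.ex r.1) (S15.ex r.2) (S15.dz F) = 0 := by
      rw [hPF, S15.dz_X_pow_mul, map_mul, map_pow, S15.ee_X] at edz
      rcases mul_eq_zero.mp edz with h | h
      · exact absurd h (pow_ne_zero _ hv0)
      · exact h
    -- y-derivative
    have hy' : (S15.dyP p).toFun (r.1, r.2) = 0 := by
      rw [← S15.pderivY_toFun, Prod.mk.eta]; exact hy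
    have ey0 : S15.ee (S15.ex r.1) (S15.ex r.2) (S15.poly (S15.dyP p)) = 0 :=
      S15.ee_poly_zero _ _ _ hy'
    rw [S15.poly_dyP] at ey0
    simp only [map_mul, map_add, S15.ee_C, S15.ee_X, Polynomial.eval_C] at ey0
    rw [e0', mul_zero, add_zero] at ey0
    have eder : S15.ee (S15.ex r.1) (S15.ex r.2) (Polynomial.derivative (S15.poly p)) = 0 := by
      rcases mul_eq_zero.mp ey0 with h | h
      · exact absurd h S15.twoPiI_ne
      · rcases mul_eq_zero.mp h with h' | h'
        · exact absurd h' hv0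
        · exact h'
    have ederF : S15.ee (S15.ex r.1) (S15.ex r.2) (Polynomial.derivative F) = 0 := by
      rw [hPF, Polynomial.derivative_mul] at eder
      simp only [map_add, map_mul, map_pow, S15.ee_X] at eder
      rw [eF, mul_zero, zero_add] at eder
      rcases mul_eq_zero.mp eder with h | h
      · exact absurd h (pow_ne_zero _ hv0)
      · exact h
    exact ⟨⟨r.1, rfl⟩, ⟨r.2, rfl⟩, eF, edzF, ederF⟩
  apply Set.Finite.of_finite_image (f := fun r : ℝ × ℝ => ((S15.ex r.1, S15.ex r.2) : ℂ × ℂ))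
  · apply hSfin.subset
    rintro w ⟨r, hr, rfl⟩
    exact hmem r hr.2.1 hr.2.2.1 hr.2.2.2
  · rintro r hr r' hr' heq
    have h1 : S15.ex r.1 = S15.ex r'.1 := congrArg Prod.fst heq
    have h2 : S15.ex r.2 = S15.ex r'.2 := congrArg Prod.snd heq
    exact Prod.ext (S15.ex_injOn hr.1.1 hr'.1.1 h1) (S15.ex_injOn hr.1.2 hr'.1.2 h2)

end
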